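/- Let a, b > 0 be real numbers, λ ∈ (0,1), q > 1, and set r = min{a,b} / max{a,b} ∈ (0,1]. Then max{a,b} − (λ a^q + (1−λ) b^q)^{1/q} ≤ (1/q) · max{a,b} · max{ λ^{(1/q)−1}(1−λ), (1−λ)^{(1/q)−1} λ } · (1 − r^q). -/
import Mathlib

open Real

private lemma key_pow {p lam s : ℝ} (hp0 : 0 < p) (hp1 : p ≤ 1) (hlam : 0 < lam)
    (hls : lam ≤ s) (hs1 : s ≤ 1) :
    1 - s ^ p ≤ p * lam ^ (p - 1) * (1 - s) := by
  have hs0 : 0 < s := lt_of_lt_of_le hlam hls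
  have hB : (s⁻¹) ^ p ≤ 1 + p * (s⁻¹ - 1) := by
    have := rpow_one_add_le_one_add_mul_self (s := s⁻¹ - 1)
      (by nlinarith [inv_pos.2 hs0]) hp0.le hp1
    simpa using this
  have h1 : s ^ p * s⁻¹ ^ p = 1 := by
    rw [← Real.mul_rpow hs0.le (inv_nonneg.2 hs0.le), mul_inv_cancel₀ hs0.ne', Real.one_rpow]
  have h2 : s ^ p * s⁻¹ = s ^ (p - 1) := by
    rw [Real.rpow_sub hs0, Real.rpow_one, div_eq_mul_inv]
  have h3 : 1 ≤ s ^ p + p * (s ^ (p - 1) - s ^ p) := by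
    calc 1 = s ^ p * s⁻¹ ^ p := h1.symm
      _ ≤ s ^ p * (1 + p * (s⁻¹ - 1)) :=
        mul_le_mul_of_nonneg_left hB (Real.rpow_nonneg hs0.le p)
      _ = s ^ p + p * (s ^ p * s⁻¹ - s ^ p) := by ring
      _ = s ^ p + p * (s ^ (p - 1) - s ^ p) := by rw [h2]
  have h4 : s ^ (p - 1) * s = s ^ p := by
    have h := Real.rpow_add hs0 (p - 1) 1
    rw [Real.rpow_one] at h
    rw [← h, sub_add_cancel]
  have h5 : s ^ (p - 1) ≤ lam ^ (p - 1) :=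
    Real.rpow_le_rpow_of_nonpos hlam hls (by linarith)
  have h6 : s ^ (p - 1) - s ^ p = s ^ (p - 1) * (1 - s) := by rw [mul_sub, mul_one, h4]
  have h7 : s ^ (p - 1) * (1 - s) ≤ lam ^ (p - 1) * (1 - s) :=
    mul_le_mul_of_nonneg_right h5 (by linarith)
  nlinarith [h3, h6, h7]

private lemma aux_side (a b lam q : ℝ) (ha : 0 < a) (hb : 0 < b) (hab : b ≤ a)
    (hl0 : 0 < lam) (hl1 : lam < 1) (hq : 1 < q) :
    a - (lam * a ^ q + (1 - lam) * b ^ q) ^ (1 / q) ≤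
      (1 / q) * a * (lam ^ (1 / q - 1) * (1 - lam)) * (1 - (b / a) ^ q) := by
  have hq0 : 0 < q := by linarith
  set p : ℝ := 1 / q with hp
  have hp0 : 0 < p := by positivity
  have hp1 : p ≤ 1 := by
    rw [hp, div_le_one hq0]; linarith
  set x : ℝ := (b / a) ^ q with hx
  have hx0 : 0 < x := Real.rpow_pos_of_pos (by positivity) q
  have hx1 : x ≤ 1 := Real.rpow_le_one (by positivity) (by rw [div_le_one ha]; exact hab) hq0.le
  set s : ℝ := lam + (1 - lam) * x with hs
  have hls : lam ≤ s := by nlinarith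
  have hs1 : s ≤ 1 := by nlinarith
  have hbq : b ^ q = a ^ q * x := by
    rw [hx, Real.div_rpow hb.le ha.le]
    field_simp
  have hsum : lam * a ^ q + (1 - lam) * b ^ q = a ^ q * s := by rw [hbq, hs]; ring
  have hpow : (lam * a ^ q + (1 - lam) * b ^ q) ^ p = a * s ^ p := by
    have hs0 : (0:ℝ) ≤ s := by nlinarith
    rw [hsum, Real.mul_rpow (Real.rpow_nonneg ha.le q) hs0]
    congr 1
    rw [← Real.rpow_mul ha.le, mul_one_div, div_self hq0.ne', Real.rpow_one]
  have hkey := key_pow hp0 hp1 hl0 hls hs1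
  have h1s : 1 - s = (1 - lam) * (1 - x) := by rw [hs]; ring
  calc a - (lam * a ^ q + (1 - lam) * b ^ q) ^ p = a * (1 - s ^ p) := by rw [hpow]; ring
    _ ≤ a * (p * lam ^ (p - 1) * (1 - s)) := mul_le_mul_of_nonneg_left hkey ha.le
    _ = p * a * (lam ^ (p - 1) * (1 - lam)) * (1 - x) := by rw [h1s]; ring

/-- The symmetric form of the key elementary inequality in the proof of
Proposition 4.1: for `a, b > 0`, `λ ∈ (0,1)`, `q > 1` and `r = min{a,b}/max{a,b}`,
`max{a,b} − (λ a^q + (1−λ) b^q)^{1/q}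
  ≤ (1/q) max{a,b} max{λ^{1/q−1}(1−λ), (1−λ)^{1/q−1} λ} (1 − r^q)`. -/
theorem stmt_3 (a b lam q : ℝ) (ha : 0 < a) (hb : 0 < b)
    (hlam : lam ∈ Set.Ioo (0 : ℝ) 1) (hq : 1 < q) :
    max a b - (lam * a ^ q + (1 - lam) * b ^ q) ^ (1 / q) ≤
      (1 / q) * max a b *
        max (lam ^ (1 / q - 1) * (1 - lam)) ((1 - lam) ^ (1 / q - 1) * lam) *
        (1 - (min a b / max a b) ^ q) := by
  obtain ⟨hl0, hl1⟩ := hlam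
  have hq0 : 0 < q := by linarith
  rcases le_total b a with hab | hab
  · rw [max_eq_left hab, min_eq_right hab]
    have h1x : (0:ℝ) ≤ 1 - (b / a) ^ q := by
      have h : (b / a : ℝ) ^ q ≤ 1 :=
        Real.rpow_le_one (by positivity) (by rw [div_le_one ha]; exact hab) hq0.le
      linarith
    calc a - (lam * a ^ q + (1 - lam) * b ^ q) ^ (1 / q)
        ≤ (1 / q) * a * (lam ^ (1 / q - 1) * (1 - lam)) * (1 - (b / a) ^ q) :=
          aux_side a b lam q ha hb hab hl0 hl1 hq
      _ ≤ (1 / q) * a *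
            max (lam ^ (1 / q - 1) * (1 - lam)) ((1 - lam) ^ (1 / q - 1) * lam) *
            (1 - (b / a) ^ q) :=
          mul_le_mul_of_nonneg_right
            (mul_le_mul_of_nonneg_left (le_max_left _ _) (by positivity)) h1x
  · rw [max_eq_right hab, min_eq_left hab]
    have h1x : (0:ℝ) ≤ 1 - (a / b) ^ q := by
      have h : (a / b : ℝ) ^ q ≤ 1 :=
        Real.rpow_le_one (by positivity) (by rw [div_le_one hb]; exact hab) hq0.le
      linarith
    have h := aux_side b a (1 - lam) q hb ha hab (by linarith) (by linarith) hq
    simp only [sub_sub_cancel] at h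
    have hsum : lam * a ^ q + (1 - lam) * b ^ q = (1 - lam) * b ^ q + lam * a ^ q := by ring
    rw [hsum]
    calc b - ((1 - lam) * b ^ q + lam * a ^ q) ^ (1 / q)
        ≤ (1 / q) * b * ((1 - lam) ^ (1 / q - 1) * lam) * (1 - (a / b) ^ q) := h
      _ ≤ (1 / q) * b *
            max (lam ^ (1 / q - 1) * (1 - lam)) ((1 - lam) ^ (1 / q - 1) * lam) *
            (1 - (a / b) ^ q) :=
          mul_le_mul_of_nonneg_right
            (mul_le_mul_of_nonneg_left (le_max_right _ _) (by positivity)) h1x
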